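/- For X ∈ ℝ^{n×m} with singular values σ₁ ≥ ... ≥ σ_r > 0 (r = rank X), λ > 0, and k ≤ r, the global minimum value of J(U,V) = ‖X − UVᵀ‖²_F + λ‖U‖²_F + λ‖V‖²_F over U ∈ ℝ^{n×k}, V ∈ ℝ^{m×k} equals Σ_{i>k} σᵢ² + Σ_{i=1}^{k} [σᵢ² − (σᵢ−λ)₊²]. -/

import Mathlib

open Matrix BigOperators

noncomputable def frobSq {n m : ℕ} (A : Matrix (Fin n) (Fin m) ℝ) : ℝ :=
  ∑ i, ∑ j, (A i j)^2

lemma frobSq_nonneg {n m : ℕ} (A : Matrix (Fin n) (Fin m) ℝ) : 0 ≤ frobSq A :=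
  Finset.sum_nonneg fun _ _ => Finset.sum_nonneg fun _ _ => sq_nonneg _

lemma frobSq_eq_trace {n m : ℕ} (A : Matrix (Fin n) (Fin m) ℝ) :
    frobSq A = Matrix.trace (Aᵀ * A) := by
  rw [frobSq, Matrix.trace, Finset.sum_comm]
  congr 1; ext j
  simp [Matrix.mul_apply, Matrix.diag, sq]

lemma frobSq_mul_left {n r m : ℕ} {F : Matrix (Fin n) (Fin r) ℝ} (hF : Fᵀ*F = 1)
    (N : Matrix (Fin r) (Fin m) ℝ) : frobSq (F*N) = frobSq N := by
  rw [frobSq_eq_trace, frobSq_eq_trace, Matrix.transpose_mul, Matrix.mul_assoc,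
    ← Matrix.mul_assoc Fᵀ F N, hF, Matrix.one_mul]

lemma frobSq_mul_right {n m s : ℕ} {G : Matrix (Fin m) (Fin s) ℝ} (hG : Gᵀ*G = 1)
    (N : Matrix (Fin n) (Fin s) ℝ) : frobSq (N*Gᵀ) = frobSq N := by
  rw [frobSq_eq_trace, frobSq_eq_trace, Matrix.transpose_mul, Matrix.transpose_transpose,
    Matrix.trace_mul_comm, Matrix.mul_assoc]
  have h2 : Gᵀ * (G * Nᵀ) = Nᵀ := by rw [← Matrix.mul_assoc, hG, Matrix.one_mul]
  rw [h2, Matrix.trace_mul_comm]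

lemma trace_cross {n m r s : ℕ} (F : Matrix (Fin n) (Fin r) ℝ) (G : Matrix (Fin m) (Fin s) ℝ)
    (M : Matrix (Fin n) (Fin m) ℝ) (N : Matrix (Fin r) (Fin s) ℝ) :
    Matrix.trace (Mᵀ * (F*N*Gᵀ)) = Matrix.trace ((Fᵀ*M*G)ᵀ * N) := by
  rw [Matrix.transpose_mul, Matrix.transpose_mul, Matrix.transpose_transpose]
  -- goal : trace (Mᵀ * (F*N*Gᵀ)) = trace (Gᵀ * Mᵀ * F * N)
  simp only [← Matrix.mul_assoc]
  rw [Matrix.trace_mul_comm (Mᵀ*F*N) Gᵀ]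
  simp only [← Matrix.mul_assoc]

lemma frobSq_sandwich {n m r s : ℕ} (F : Matrix (Fin n) (Fin r) ℝ) (G : Matrix (Fin m) (Fin s) ℝ)
    (hF : Fᵀ*F = 1) (hG : Gᵀ*G = 1) (M : Matrix (Fin n) (Fin m) ℝ) :
    frobSq (Fᵀ*M*G) ≤ frobSq M := by
  set N := Fᵀ*M*G with hN
  set W := F*N*Gᵀ with hW
  have hWfrob : frobSq W = frobSq N := by
    rw [hW, Matrix.mul_assoc, frobSq_mul_left hF, frobSq_mul_right hG]
  have hcross : Matrix.trace (Mᵀ * W) = frobSq N := by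
    rw [hW, trace_cross, ← hN, ← frobSq_eq_trace]
  have hcross2 : Matrix.trace (Wᵀ * M) = frobSq N := by
    rw [← Matrix.trace_transpose, Matrix.transpose_mul, Matrix.transpose_transpose, hcross]
  have hexp : frobSq (M - W) = frobSq M - frobSq N := by
    rw [frobSq_eq_trace, Matrix.transpose_sub, Matrix.sub_mul, Matrix.mul_sub, Matrix.mul_sub,
      Matrix.trace_sub, Matrix.trace_sub, Matrix.trace_sub, hcross, hcross2,
      ← frobSq_eq_trace, ← frobSq_eq_trace, hWfrob]
    ring
  have := frobSq_nonneg (M - W)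
  linarith [hexp]

lemma scalar_T_bound (X μ s P lam : ℝ) (hX : 0 ≤ X) (hμ : 0 ≤ μ) (hs : 0 ≤ s)
    (hlam : 0 < lam) (hP : P^2 ≤ X*μ*s) :
    2*P - (μ+lam)*X - lam*μ ≤ (max (Real.sqrt s - lam) 0)^2 := by
  set t := Real.sqrt s with ht
  have ht0 : 0 ≤ t := Real.sqrt_nonneg s
  have hts : t^2 = s := Real.sq_sqrt hs
  rcases eq_or_lt_of_le hX with hX0|hX0
  · rw [← hX0] at hP
    simp only [zero_mul] at hP
    have hPsq : P^2 = 0 := le_antisymm hP (sq_nonneg P)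
    have hP0 : P = 0 := by
      have := sq_eq_zero_iff.mp hPsq; exact this
    rw [← hX0, hP0]
    have h1 : 0 ≤ (max (t - lam) 0)^2 := sq_nonneg _
    have h2 : 0 ≤ lam*μ := mul_nonneg hlam.le hμ
    linarith
  · have hpos : 0 < (μ+lam)*X := mul_pos (by linarith) hX0
    rcases le_or_gt t lam with h|h
    · have hmax : max (t - lam) 0 = 0 := max_eq_right (by linarith)
      rw [hmax]
      have hsl : s ≤ lam^2 := by nlinarith
      have key : (μ+lam)*X*(2*P - (μ+lam)*X - lam*μ - 0^2) ≤ 0 := by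
        nlinarith [sq_nonneg (P - (μ+lam)*X),
          mul_nonneg (mul_nonneg hX hμ) (sub_nonneg.2 hsl),
          mul_nonneg (mul_nonneg (mul_nonneg hlam.le hμ) hμ) hX]
      by_contra h'
      push_neg at h'
      exact absurd key (not_le.2 (mul_pos hpos (by linarith)))
    · have hmax : max (t - lam) 0 = t - lam := max_eq_left (by linarith)
      rw [hmax]
      have hP' : P^2 ≤ X*μ*t^2 := by rw [hts]; exact hP
      have key : (μ+lam)*X*(2*P - (μ+lam)*X - lam*μ - (t-lam)^2) ≤ 0 := by
        nlinarith [sq_nonneg (P - (μ+lam)*X), hP',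
          mul_nonneg (mul_nonneg hX hlam.le) (sq_nonneg (t - μ - lam))]
      by_contra h'
      push_neg at h'
      exact absurd key (not_le.2 (mul_pos hpos (by linarith)))

lemma jensen_step {r : ℕ} (lam : ℝ) (hlam : 0 < lam) (w x : Fin r → ℝ)
    (hw0 : ∀ i, 0 ≤ w i) (hw1 : ∑ i, w i ≤ 1) (hx : ∀ i, 0 ≤ x i) :
    (max (Real.sqrt (∑ i, w i * (x i)^2) - lam) 0)^2 ≤ ∑ i, w i * (max (x i - lam) 0)^2 := by
  set s := ∑ i, w i * (x i)^2 with hsdef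
  have hs0 : 0 ≤ s := Finset.sum_nonneg fun i _ => mul_nonneg (hw0 i) (sq_nonneg _)
  set t := Real.sqrt s with htdef
  have ht0 : 0 ≤ t := Real.sqrt_nonneg s
  have hts : t^2 = s := Real.sq_sqrt hs0
  have hRHS0 : 0 ≤ ∑ i, w i * (max (x i - lam) 0)^2 :=
    Finset.sum_nonneg fun i _ => mul_nonneg (hw0 i) (sq_nonneg _)
  rcases le_or_gt t lam with h|h
  · rw [max_eq_right (by linarith)]
    simpa using hRHS0
  · rw [max_eq_left (by linarith)]
    have htpos : 0 < t := lt_trans hlam h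
    have key : ∀ i, (1 - lam/t) * (x i)^2 - lam*(t-lam) ≤ (max (x i - lam) 0)^2 := by
      intro i
      have hrw : (1 - lam/t) * (x i)^2 = ((t-lam) * (x i)^2)/t := by
        field_simp
      rw [hrw, sub_le_iff_le_add, div_le_iff₀ htpos]
      rcases le_or_gt (x i) lam with hxi|hxi
      · rw [max_eq_right (by linarith)]
        nlinarith [mul_nonneg (sub_nonneg.2 h.le) (mul_nonneg ht0 hlam.le),
          mul_nonneg (sub_nonneg.2 h.le) (mul_nonneg (sub_nonneg.2 hxi) (by linarith [hx i] : (0:ℝ) ≤ x i + lam))]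
      · rw [max_eq_left (by linarith)]
        nlinarith [mul_nonneg hlam.le (sq_nonneg (x i - t))]
    have step1 : (t-lam)^2 = (1 - lam/t)*s - lam*(t-lam) := by
      rw [← hts]; field_simp
    rw [step1]
    have step2 : (1 - lam/t)*s - lam*(t-lam) ≤ ∑ i, (w i * ((1 - lam/t) * (x i)^2 - lam*(t-lam))) := by
      have expand : ∑ i, (w i * ((1 - lam/t) * (x i)^2 - lam*(t-lam)))
          = (1 - lam/t)*s - lam*(t-lam)*(∑ i, w i) := by
        rw [hsdef, Finset.mul_sum, Finset.mul_sum, ← Finset.sum_sub_distrib]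
        exact Finset.sum_congr rfl fun i _ => by ring
      rw [expand]
      have hlt : 0 ≤ lam*(t-lam) := mul_nonneg hlam.le (by linarith)
      nlinarith [hlt, hw1]
    refine le_trans step2 (Finset.sum_le_sum fun i _ => ?_)
    exact mul_le_mul_of_nonneg_left (key i) (hw0 i)

lemma sum_top {r k : ℕ} (hk : k ≤ r) (c : Fin r → ℝ) :
    ∑ i : Fin r, (if (i:ℕ) < k then c i else 0) = ∑ j : Fin k, c (Fin.castLE hk j) := by
  rw [Finset.sum_ite, Finset.sum_const_zero, add_zero]
  refine (Finset.sum_bij' (fun (i : Fin r) (hi : i ∈ Finset.univ.filter (fun i : Fin r => (i:ℕ) < k)) =>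
      (⟨(i:ℕ), (Finset.mem_filter.mp hi).2⟩ : Fin k))
    (fun (j : Fin k) _ => Fin.castLE hk j) ?_ ?_ ?_ ?_ ?_)
  · intro i hi; simp
  · intro j hj; simp [Fin.castLE, Fin.is_lt]
  · intro i hi; ext; simp
  · intro j hj; ext; simp
  · intro i hi; rfl

lemma rearrange {r k : ℕ} (hk : k ≤ r) (c R : Fin r → ℝ) (hcanti : Antitone c)
    (hc0 : ∀ i, 0 ≤ c i) (hR0 : ∀ i, 0 ≤ R i) (hR1 : ∀ i, R i ≤ 1)
    (hRsum : ∑ i, R i ≤ (k:ℝ)) :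
    ∑ i, R i * c i ≤ ∑ j : Fin k, c (Fin.castLE hk j) := by
  rcases Nat.eq_zero_or_pos k with hk0|hk0
  · subst hk0
    simp only [Finset.univ_eq_empty, Finset.sum_empty]
    have hall : ∀ i ∈ Finset.univ, R i = 0 := by
      intro i _
      have hsum0 : ∑ i, R i = 0 := le_antisymm (by simpa using hRsum)
        (Finset.sum_nonneg fun i _ => hR0 i)
      exact (Finset.sum_eq_zero_iff_of_nonneg (fun i _ => hR0 i)).mp hsum0 i (Finset.mem_univ i)
    have hz : ∑ i, R i * c i = ∑ i : Fin r, (0:ℝ) :=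
      Finset.sum_congr rfl (fun i hi => by rw [hall i hi, zero_mul])
    rw [hz, Finset.sum_const_zero]
  · set K : Fin r := ⟨k-1, by omega⟩ with hK
    set θ := c K with hθ
    have hθ0 : 0 ≤ θ := hc0 K
    have key : ∀ i : Fin r, R i * c i ≤ (if (i:ℕ) < k then c i else 0) + (R i - (if (i:ℕ) < k then 1 else 0)) * θ := by
      intro i
      by_cases h : (i:ℕ) < k
      · simp only [if_pos h]
        have hci : θ ≤ c i := hcanti (by rw [Fin.le_def]; simp [hK]; omega)
        nlinarith [mul_nonneg (sub_nonneg.2 (hR1 i)) (sub_nonneg.2 hci)]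
      · simp only [if_neg h]
        have hci : c i ≤ θ := hcanti (by rw [Fin.le_def]; simp [hK]; omega)
        nlinarith [mul_nonneg (hR0 i) (sub_nonneg.2 hci)]
    have hsum : ∑ i, R i * c i ≤ ∑ i : Fin r, ((if (i:ℕ) < k then c i else 0) + (R i - (if (i:ℕ) < k then 1 else 0)) * θ) :=
      Finset.sum_le_sum fun i _ => key i
    have hχ : ∑ i : Fin r, (if (i:ℕ) < k then (1:ℝ) else 0) = (k:ℝ) := by
      rw [sum_top hk (fun _ => (1:ℝ))]; simp
    have hsplit : ∑ i : Fin r, ((if (i:ℕ) < k then c i else 0) + (R i - (if (i:ℕ) < k then 1 else 0)) * θ)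
        = (∑ i : Fin r, (if (i:ℕ) < k then c i else 0)) + ((∑ i, R i) - (k:ℝ)) * θ := by
      rw [Finset.sum_add_distrib, ← Finset.sum_mul, Finset.sum_sub_distrib, hχ]
    rw [hsplit, sum_top hk c] at hsum
    have : ((∑ i, R i) - (k:ℝ)) * θ ≤ 0 :=
      mul_nonpos_of_nonpos_of_nonneg (by linarith) hθ0
    linarith

lemma rowsum_le_one {r k : ℕ} (B : Matrix (Fin r) (Fin k) ℝ) (μ : Fin k → ℝ)
    (hBB : Bᵀ*B = Matrix.diagonal μ) (i : Fin r) :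
    ∑ j, (if μ j = 0 then 0 else (B i j)^2 / μ j) ≤ 1 := by
  set D : Matrix (Fin k) (Fin k) ℝ := Matrix.diagonal (fun j => if μ j = 0 then 0 else (μ j)⁻¹) with hD
  set P : Matrix (Fin r) (Fin r) ℝ := B*D*Bᵀ with hPdef
  have hPsym : Pᵀ = P := by
    rw [hPdef, Matrix.transpose_mul, Matrix.transpose_mul, Matrix.transpose_transpose,
      Matrix.diagonal_transpose, ← Matrix.mul_assoc]
  have hDD : D * Matrix.diagonal μ * D = D := by
    rw [hD, Matrix.diagonal_mul_diagonal, Matrix.diagonal_mul_diagonal]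
    apply congrArg Matrix.diagonal
    funext j
    by_cases h : μ j = 0
    · simp [h]
    · simp only [if_neg h]
      field_simp
  have hPP : P*P = P := by
    rw [hPdef]
    calc B*D*Bᵀ*(B*D*Bᵀ) = B*(D*(Bᵀ*B)*D)*Bᵀ := by
          simp only [Matrix.mul_assoc]
        _ = B*D*Bᵀ := by rw [hBB, hDD]
  have hPentry : P i i = ∑ j, (if μ j = 0 then 0 else (B i j)^2 / μ j) := by
    rw [hPdef, Matrix.mul_apply]
    refine Finset.sum_congr rfl fun j _ => ?_
    rw [Matrix.mul_diagonal, Matrix.transpose_apply]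
    by_cases h : μ j = 0
    · simp [h]
    · rw [if_neg h, if_neg h]
      field_simp
  have hPii : P i i = ∑ l, (P i l)^2 := by
    conv_lhs => rw [← hPP]
    rw [Matrix.mul_apply]
    refine Finset.sum_congr rfl fun l _ => ?_
    have : P l i = P i l := by
      conv_lhs => rw [← hPsym]
      rfl
    rw [this, sq]
  have h0 : 0 ≤ P i i := by rw [hPii]; exact Finset.sum_nonneg fun l _ => sq_nonneg _
  have h1 : (P i i)^2 ≤ ∑ l, (P i l)^2 :=
    Finset.single_le_sum (fun l _ => sq_nonneg (P i l)) (Finset.mem_univ i)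
  have : P i i ≤ 1 := by nlinarith [hPii, h1, h0]
  rw [← hPentry]
  exact this

lemma frobSq_sub_expand {n m : ℕ} (D Z : Matrix (Fin n) (Fin m) ℝ) :
    frobSq (D - Z) = frobSq D - 2*(∑ i, ∑ j, D i j * Z i j) + frobSq Z := by
  unfold frobSq
  rw [Finset.mul_sum, ← Finset.sum_sub_distrib, ← Finset.sum_add_distrib]
  refine Finset.sum_congr rfl fun i _ => ?_
  rw [Finset.mul_sum, ← Finset.sum_sub_distrib, ← Finset.sum_add_distrib]
  refine Finset.sum_congr rfl fun j _ => ?_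
  rw [Matrix.sub_apply]; ring

lemma frobSq_diagonal {n : ℕ} (f : Fin n → ℝ) :
    frobSq (Matrix.diagonal f) = ∑ i, (f i)^2 := by
  unfold frobSq
  refine Finset.sum_congr rfl fun i _ => ?_
  rw [Finset.sum_eq_single i]
  · rw [Matrix.diagonal_apply_eq]
  · intro j _ hj
    rw [Matrix.diagonal_apply_ne' _ hj]
    exact zero_pow two_ne_zero
  · intro h; exact absurd (Finset.mem_univ i) h

lemma core_diag {r k : ℕ} (hk : k ≤ r) (σ : Fin r → ℝ) (hσ0 : ∀ i, 0 ≤ σ i)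
    (hσmono : Antitone σ) (lam : ℝ) (hlam : 0 < lam)
    (A B : Matrix (Fin r) (Fin k) ℝ) (μ : Fin k → ℝ) (hBB : Bᵀ*B = Matrix.diagonal μ) :
    (∑ i, (σ i)^2) - (∑ j : Fin k, (max (σ (Fin.castLE hk j) - lam) 0)^2) ≤
      frobSq (Matrix.diagonal σ - A*Bᵀ) + lam * frobSq A + lam * frobSq B := by
  set Xc : Fin k → ℝ := fun j => ∑ i, (A i j)^2 with hXc
  set Pc : Fin k → ℝ := fun j => ∑ i, A i j * (σ i * B i j) with hPc
  set w : Fin r → Fin k → ℝ := fun i j => if μ j = 0 then 0 else (B i j)^2 / μ j with hw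
  set sc : Fin k → ℝ := fun j => ∑ i, w i j * (σ i)^2 with hsc
  set C : Fin r → ℝ := fun i => (max (σ i - lam) 0)^2 with hC
  have hμ : ∀ j, μ j = ∑ i, (B i j)^2 := by
    intro j
    have h := congrFun (congrFun hBB j) j
    rw [Matrix.mul_apply, Matrix.diagonal_apply_eq] at h
    rw [← h]
    exact Finset.sum_congr rfl fun i _ => by rw [Matrix.transpose_apply, sq]
  have hμ0 : ∀ j, 0 ≤ μ j := fun j => (hμ j) ▸ (Finset.sum_nonneg fun i _ => sq_nonneg _)
  have hw0 : ∀ i j, 0 ≤ w i j := by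
    intro i j
    rw [hw]
    by_cases h : μ j = 0
    · simp [h]
    · simp only [if_neg h]
      exact div_nonneg (sq_nonneg _) (hμ0 j)
  have hXc0 : ∀ j, 0 ≤ Xc j := fun j => Finset.sum_nonneg fun i _ => sq_nonneg _
  have hsc0 : ∀ j, 0 ≤ sc j :=
    fun j => Finset.sum_nonneg fun i _ => mul_nonneg (hw0 i j) (sq_nonneg _)
  -- expansions
  have hfrobA : frobSq A = ∑ j, Xc j := by
    rw [frobSq, Finset.sum_comm]
  have hfrobB : frobSq B = ∑ j, μ j := by
    rw [frobSq, Finset.sum_comm]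
    exact Finset.sum_congr rfl fun j _ => (hμ j).symm
  have hfrobZ : frobSq (A*Bᵀ) = ∑ j, μ j * Xc j := by
    rw [frobSq_eq_trace, Matrix.transpose_mul, Matrix.transpose_transpose,
      Matrix.trace_mul_comm]
    have e1 : A*Bᵀ*(B*Aᵀ) = A*(Matrix.diagonal μ)*Aᵀ := by
      calc A*Bᵀ*(B*Aᵀ) = A*((Bᵀ*B)*Aᵀ) := by simp only [Matrix.mul_assoc]
        _ = A*(Matrix.diagonal μ)*Aᵀ := by rw [hBB, Matrix.mul_assoc]
    rw [e1, Matrix.trace_mul_comm, ← Matrix.mul_assoc, Matrix.trace]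
    refine Finset.sum_congr rfl fun j _ => ?_
    rw [Matrix.diag, Matrix.mul_diagonal]
    have h2 : (Aᵀ*A) j j = Xc j := by
      rw [Matrix.mul_apply]
      exact Finset.sum_congr rfl fun i _ => by rw [Matrix.transpose_apply, sq]
    rw [h2, mul_comm]
  have hip : ∑ i, ∑ i', Matrix.diagonal σ i i' * ((A*Bᵀ) i i') = ∑ j, Pc j := by
    have e1 : ∀ i : Fin r, ∑ i', Matrix.diagonal σ i i' * ((A*Bᵀ) i i')
        = ∑ j, A i j * (σ i * B i j) := by
      intro i
      rw [Finset.sum_eq_single i]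
      · rw [Matrix.diagonal_apply_eq, Matrix.mul_apply, Finset.mul_sum]
        exact Finset.sum_congr rfl fun j _ => by rw [Matrix.transpose_apply]; ring
      · intro i' _ hne
        rw [Matrix.diagonal_apply_ne _ (Ne.symm hne), zero_mul]
      · intro h; exact absurd (Finset.mem_univ i) h
    calc ∑ i, ∑ i', Matrix.diagonal σ i i' * ((A*Bᵀ) i i')
        = ∑ i, ∑ j, A i j * (σ i * B i j) := Finset.sum_congr rfl fun i _ => e1 i
      _ = ∑ j, Pc j := Finset.sum_comm
  have hfrobD : frobSq (Matrix.diagonal σ - A*Bᵀ)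
      = (∑ i, (σ i)^2) - 2*(∑ j, Pc j) + ∑ j, μ j * Xc j := by
    rw [frobSq_sub_expand, frobSq_diagonal, hfrobZ, hip]
  -- per-column bounds
  have key1 : ∀ j, 2*Pc j - (μ j + lam)*Xc j - lam*μ j
      ≤ (max (Real.sqrt (sc j) - lam) 0)^2 := by
    intro j
    have hY : μ j * sc j = ∑ i, (σ i * B i j)^2 := by
      by_cases h : μ j = 0
      · have hBz : ∀ i, B i j = 0 := by
          intro i
          have h2 : ∑ i, (B i j)^2 = 0 := by rw [← hμ j, h]
          have h3 := (Finset.sum_eq_zero_iff_of_nonneg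
            (fun i _ => sq_nonneg (B i j))).mp h2 i (Finset.mem_univ i)
          exact pow_eq_zero_iff two_ne_zero |>.mp h3
        simp [h, hBz]
      · rw [hsc, Finset.mul_sum]
        refine Finset.sum_congr rfl fun i _ => ?_
        rw [hw]; simp only [if_neg h]
        field_simp
    have hCS : (Pc j)^2 ≤ Xc j * (∑ i, (σ i * B i j)^2) :=
      Finset.sum_mul_sq_le_sq_mul_sq Finset.univ (fun i => A i j) (fun i => σ i * B i j)
    refine scalar_T_bound (Xc j) (μ j) (sc j) (Pc j) lam (hXc0 j) (hμ0 j) (hsc0 j) hlam ?_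
    calc (Pc j)^2 ≤ Xc j * (μ j * sc j) := by rw [hY]; exact hCS
      _ = Xc j * μ j * sc j := by ring
  have key2 : ∀ j, (max (Real.sqrt (sc j) - lam) 0)^2 ≤ ∑ i, w i j * C i := by
    intro j
    have hcol : ∑ i, w i j ≤ 1 := by
      by_cases h : μ j = 0
      · simp [hw, h]
      · rw [hw]; simp only [if_neg h]
        rw [← Finset.sum_div, ← hμ j, div_self h]
    exact jensen_step lam hlam (fun i => w i j) σ (fun i => hw0 i j) hcol hσ0
  have key3 : ∑ j, (∑ i, w i j * C i) = ∑ i, (∑ j, w i j) * C i := by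
    rw [Finset.sum_comm]
    exact Finset.sum_congr rfl fun i _ => (Finset.sum_mul ..).symm
  have hR1 : ∀ i, ∑ j, w i j ≤ 1 := fun i => rowsum_le_one B μ hBB i
  have hR0 : ∀ i, 0 ≤ ∑ j, w i j := fun i => Finset.sum_nonneg fun j _ => hw0 i j
  have hRsum : ∑ i, ∑ j, w i j ≤ (k:ℝ) := by
    rw [Finset.sum_comm]
    calc ∑ j : Fin k, ∑ i, w i j ≤ ∑ j : Fin k, (1:ℝ) := by
          refine Finset.sum_le_sum fun j _ => ?_
          by_cases h : μ j = 0
          · simp [hw, h]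
          · rw [hw]; simp only [if_neg h]
            rw [← Finset.sum_div, ← hμ j, div_self h]
      _ = (k:ℝ) := by simp
  have hCanti : Antitone C := by
    intro a b hab
    rw [hC]
    have h1 : max (σ b - lam) 0 ≤ max (σ a - lam) 0 :=
      max_le_max (sub_le_sub_right (hσmono hab) lam) le_rfl
    exact pow_le_pow_left₀ (le_max_right _ 0) h1 2
  have hC0 : ∀ i, 0 ≤ C i := fun i => sq_nonneg _
  have key4 : ∑ i, (∑ j, w i j) * C i ≤ ∑ j : Fin k, C (Fin.castLE hk j) :=
    rearrange hk C (fun i => ∑ j, w i j) hCanti hC0 hR0 hR1 hRsum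
  have hchain : ∑ j, (2*Pc j - (μ j + lam)*Xc j - lam*μ j) ≤ ∑ j : Fin k, C (Fin.castLE hk j) := by
    calc ∑ j, (2*Pc j - (μ j + lam)*Xc j - lam*μ j)
        ≤ ∑ j, (∑ i, w i j * C i) :=
          Finset.sum_le_sum fun j _ => le_trans (key1 j) (key2 j)
      _ = ∑ i, (∑ j, w i j) * C i := key3
      _ ≤ ∑ j : Fin k, C (Fin.castLE hk j) := key4
  have hexp : ∑ j, (2*Pc j - (μ j + lam)*Xc j - lam*μ j)
      = 2*(∑ j, Pc j) - ((∑ j, μ j * Xc j) + lam*(∑ j, Xc j)) - lam*(∑ j, μ j) := by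
    rw [Finset.mul_sum, Finset.mul_sum, Finset.mul_sum, ← Finset.sum_add_distrib,
      ← Finset.sum_sub_distrib, ← Finset.sum_sub_distrib]
    exact Finset.sum_congr rfl fun j _ => by ring
  have hgoalC : ∑ j : Fin k, C (Fin.castLE hk j)
      = ∑ j : Fin k, (max (σ (Fin.castLE hk j) - lam) 0)^2 := rfl
  rw [hfrobD, hfrobA, hfrobB]
  rw [hexp, hgoalC] at hchain
  linarith [hchain]

lemma exists_rot {k : ℕ} (S : Matrix (Fin k) (Fin k) ℝ) (hS : Sᵀ = S) :
    ∃ Q : Matrix (Fin k) (Fin k) ℝ, Qᵀ*Q = 1 ∧ Q*Qᵀ = 1 ∧ ∃ μ : Fin k → ℝ,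
      Qᵀ*S*Q = Matrix.diagonal μ := by
  have hH : S.IsHermitian := by
    rw [Matrix.IsHermitian, Matrix.conjTranspose_eq_transpose_of_trivial, hS]
  refine ⟨(hH.eigenvectorUnitary : Matrix (Fin k) (Fin k) ℝ), ?_, ?_, hH.eigenvalues, ?_⟩
  · have := Matrix.mem_unitaryGroup_iff'.mp (hH.eigenvectorUnitary).2
    rwa [← Matrix.conjTranspose_eq_transpose_of_trivial] at *
  · have := Matrix.mem_unitaryGroup_iff.mp (hH.eigenvectorUnitary).2
    rwa [← Matrix.conjTranspose_eq_transpose_of_trivial] at *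
  · have h2 := hH.conjStarAlgAut_star_eigenvectorUnitary
    rw [Unitary.conjStarAlgAut_star_apply, Matrix.star_eq_conjTranspose, Matrix.conjTranspose_eq_transpose_of_trivial] at h2
    rw [h2]
    congr 1

lemma core {r k : ℕ} (hk : k ≤ r) (σ : Fin r → ℝ) (hσ0 : ∀ i, 0 ≤ σ i)
    (hσmono : Antitone σ) (lam : ℝ) (hlam : 0 < lam)
    (A B : Matrix (Fin r) (Fin k) ℝ) :
    (∑ i, (σ i)^2) - (∑ j : Fin k, (max (σ (Fin.castLE hk j) - lam) 0)^2) ≤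
      frobSq (Matrix.diagonal σ - A*Bᵀ) + lam * frobSq A + lam * frobSq B := by
  have hSsym : (Bᵀ*B)ᵀ = Bᵀ*B := by
    rw [Matrix.transpose_mul, Matrix.transpose_transpose]
  obtain ⟨Q, hQ1, hQ2, μ, hdiag⟩ := exists_rot (Bᵀ*B) hSsym
  have h1 : (B*Q)ᵀ*(B*Q) = Matrix.diagonal μ := by
    rw [Matrix.transpose_mul]
    calc Qᵀ*Bᵀ*(B*Q) = Qᵀ*(Bᵀ*B)*Q := by simp only [Matrix.mul_assoc]
      _ = Matrix.diagonal μ := hdiag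
  have h2 := core_diag hk σ hσ0 hσmono lam hlam (A*Q) (B*Q) μ h1
  have e1 : (A*Q)*(B*Q)ᵀ = A*Bᵀ := by
    rw [Matrix.transpose_mul]
    calc A*Q*(Qᵀ*Bᵀ) = A*((Q*Qᵀ)*Bᵀ) := by simp only [Matrix.mul_assoc]
      _ = A*Bᵀ := by rw [hQ2, Matrix.one_mul]
  have erot : ∀ M : Matrix (Fin r) (Fin k) ℝ, frobSq (M*Q) = frobSq M := by
    intro M
    rw [frobSq_eq_trace, frobSq_eq_trace, Matrix.transpose_mul]
    calc ((Qᵀ*Mᵀ)*(M*Q)).trace = (Qᵀ*(Mᵀ*M*Q)).trace := by simp only [Matrix.mul_assoc]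
      _ = ((Mᵀ*M*Q)*Qᵀ).trace := Matrix.trace_mul_comm _ _
      _ = ((Mᵀ*M)*(Q*Qᵀ)).trace := by simp only [Matrix.mul_assoc]
      _ = (Mᵀ*M).trace := by rw [hQ2, Matrix.mul_one]
  have e2 := erot A
  have e3 := erot B
  rw [e1, e2, e3] at h2
  exact h2


/-- The global minimum of J(U,V) = ‖X−UVᵀ‖²_F + λ‖U‖²_F + λ‖V‖²_F equals
    Σ_{i>k} σᵢ² + Σ_{i≤k}[σᵢ² − (σᵢ−λ)₊²]
      = Σᵢ σᵢ² − Σ_{i≤k} (σᵢ−λ)₊². -/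
theorem rsvd_global_min_value {n m r k : ℕ} (hk : k ≤ r)
    (X : Matrix (Fin n) (Fin m) ℝ)
    (F : Matrix (Fin n) (Fin r) ℝ) (G : Matrix (Fin m) (Fin r) ℝ)
    (σ : Fin r → ℝ) (hσpos : ∀ i, 0 < σ i) (hσmono : Antitone σ)
    (hF : Fᵀ * F = 1) (hG : Gᵀ * G = 1)
    (hX : X = F * Matrix.diagonal σ * Gᵀ)
    (lam : ℝ) (hlam : 0 < lam)
    (c : ℝ)
    (hc : c = (∑ i, (σ i)^2) - ∑ i : Fin k, (max (σ (Fin.castLE hk i) - lam) 0)^2) :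
    (∀ (U : Matrix (Fin n) (Fin k) ℝ) (V : Matrix (Fin m) (Fin k) ℝ),
        c ≤ frobSq (X - U * Vᵀ) + lam * frobSq U + lam * frobSq V) ∧
    (∃ (U : Matrix (Fin n) (Fin k) ℝ) (V : Matrix (Fin m) (Fin k) ℝ),
        frobSq (X - U * Vᵀ) + lam * frobSq U + lam * frobSq V = c) := by
  have hσ0 : ∀ i, 0 ≤ σ i := fun i => (hσpos i).le
  constructor
  · -- lower bound
    intro U V
    set A := Fᵀ*U with hA
    set B := Gᵀ*V with hB
    have hAB : Fᵀ*(X - U*Vᵀ)*G = Matrix.diagonal σ - A*Bᵀ := by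
      rw [hX, Matrix.mul_sub, Matrix.sub_mul]
      congr 1
      · simp only [Matrix.mul_assoc]
        rw [hG, Matrix.mul_one, ← Matrix.mul_assoc, hF, Matrix.one_mul]
      · have hBt : Bᵀ = Vᵀ*G := by rw [hB, Matrix.transpose_mul, Matrix.transpose_transpose]
        rw [hBt, hA]
        simp only [Matrix.mul_assoc]
    have hle1 : frobSq (Matrix.diagonal σ - A*Bᵀ) ≤ frobSq (X - U*Vᵀ) := by
      rw [← hAB]; exact frobSq_sandwich F G hF hG _
    have hle2 : frobSq A ≤ frobSq U := by
      have h1 : (1 : Matrix (Fin k) (Fin k) ℝ)ᵀ * 1 = 1 := by simp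
      have h2 := frobSq_sandwich F 1 hF h1 U
      rwa [Matrix.mul_one] at h2
    have hle3 : frobSq B ≤ frobSq V := by
      have h1 : (1 : Matrix (Fin k) (Fin k) ℝ)ᵀ * 1 = 1 := by simp
      have h2 := frobSq_sandwich G 1 hG h1 V
      rwa [Matrix.mul_one] at h2
    have hcore := core hk σ hσ0 hσmono lam hlam A B
    have m2 : lam * frobSq A ≤ lam * frobSq U := mul_le_mul_of_nonneg_left hle2 hlam.le
    have m3 : lam * frobSq B ≤ lam * frobSq V := mul_le_mul_of_nonneg_left hle3 hlam.le
    rw [hc]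
    linarith
  · -- attainment
    set Dfull : Fin r → ℝ := fun i => max (σ i - lam) 0 with hDfull
    set dfull : Fin r → ℝ := fun i => if (i:ℕ) < k then Dfull i else 0 with hdfull
    set E : Matrix (Fin r) (Fin k) ℝ :=
      Matrix.of (fun i j => if i = Fin.castLE hk j then Real.sqrt (Dfull (Fin.castLE hk j)) else 0)
      with hE
    refine ⟨F*E, G*E, ?_⟩
    have hEE : E * Eᵀ = Matrix.diagonal dfull := by
      ext i i'
      rw [Matrix.mul_apply]
      by_cases hii : i = i'
      · subst hii
        rw [Matrix.diagonal_apply_eq]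
        by_cases h : (i:ℕ) < k
        · rw [Finset.sum_eq_single (⟨(i:ℕ), h⟩ : Fin k)]
          · have hcast : i = Fin.castLE hk ⟨(i:ℕ), h⟩ := by apply Fin.ext; rfl
            rw [Matrix.transpose_apply, hE]
            simp only [Matrix.of_apply]
            rw [if_pos hcast, hdfull]
            simp only [if_pos h]
            rw [← hcast]
            exact Real.mul_self_sqrt (le_max_right _ _)
          · intro j _ hj
            have hne : ¬ (i = Fin.castLE hk j) := by
              intro hcontra
              apply hj
              apply Fin.ext
              have : ((Fin.castLE hk j) : ℕ) = (i:ℕ) := by rw [← hcontra]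
              simp [← this]
            rw [hE]; simp only [Matrix.of_apply]; rw [if_neg hne, zero_mul]
          · intro h'; exact absurd (Finset.mem_univ _) h'
        · rw [hdfull]; simp only [if_neg h]
          apply Finset.sum_eq_zero; intro j _
          have hne : ¬ (i = Fin.castLE hk j) := by
            intro hcontra
            apply h
            rw [hcontra]
            exact j.is_lt
          rw [hE]; simp only [Matrix.of_apply]; rw [if_neg hne, zero_mul]
      · rw [Matrix.diagonal_apply_ne _ hii]
        apply Finset.sum_eq_zero; intro j _
        rw [Matrix.transpose_apply, hE]; simp only [Matrix.of_apply]
        by_cases h1 : i = Fin.castLE hk j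
        · by_cases h2 : i' = Fin.castLE hk j
          · exact absurd (h1.trans h2.symm) hii
          · rw [if_neg h2, mul_zero]
        · rw [if_neg h1, zero_mul]
    have hdd : Matrix.diagonal σ - Matrix.diagonal dfull
        = Matrix.diagonal (fun i => σ i - dfull i) := by
      ext i i'
      by_cases h : i = i'
      · subst h; simp [Matrix.sub_apply]
      · simp [Matrix.sub_apply, Matrix.diagonal_apply_ne _ h]
    have hXsub : X - (F*E)*(G*E)ᵀ = F*(Matrix.diagonal (fun i => σ i - dfull i))*Gᵀ := by
      rw [hX, Matrix.transpose_mul]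
      calc F * Matrix.diagonal σ * Gᵀ - F*E*(Eᵀ*Gᵀ)
          = F * Matrix.diagonal σ * Gᵀ - F*(E*Eᵀ)*Gᵀ := by simp only [Matrix.mul_assoc]
        _ = F*(Matrix.diagonal σ - Matrix.diagonal dfull)*Gᵀ := by
            rw [hEE, Matrix.mul_sub, Matrix.sub_mul]
        _ = F*(Matrix.diagonal (fun i => σ i - dfull i))*Gᵀ := by rw [hdd]
    have hfrob1 : frobSq (X - (F*E)*(G*E)ᵀ) = ∑ i, (σ i - dfull i)^2 := by
      rw [hXsub, Matrix.mul_assoc, frobSq_mul_left hF, frobSq_mul_right hG, frobSq_diagonal]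
    have hfrobE : frobSq E = ∑ j : Fin k, Dfull (Fin.castLE hk j) := by
      rw [frobSq, Finset.sum_comm]
      refine Finset.sum_congr rfl fun j _ => ?_
      rw [Finset.sum_eq_single (Fin.castLE hk j)]
      · rw [hE]; simp only [Matrix.of_apply, if_pos]
        exact Real.sq_sqrt (le_max_right _ _)
      · intro i _ hi
        rw [hE]; simp only [Matrix.of_apply]
        rw [if_neg hi]
        exact zero_pow two_ne_zero
      · intro h'; exact absurd (Finset.mem_univ _) h'
    have hfrobU : frobSq (F*E) = ∑ j : Fin k, Dfull (Fin.castLE hk j) := by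
      rw [frobSq_mul_left hF, hfrobE]
    have hfrobV : frobSq (G*E) = ∑ j : Fin k, Dfull (Fin.castLE hk j) := by
      rw [frobSq_mul_left hG, hfrobE]
    have hsum1 : ∑ j : Fin k, Dfull (Fin.castLE hk j) = ∑ i, dfull i := by
      rw [hdfull, ← sum_top hk Dfull]
    have hptwise : ∀ i, (σ i - dfull i)^2 + 2*lam*(dfull i)
        = (σ i)^2 - (if (i:ℕ) < k then (max (σ i - lam) 0)^2 else 0) := by
      intro i
      by_cases h : (i:ℕ) < k
      · simp only [hdfull, hDfull, if_pos h]
        rcases le_or_gt (σ i) lam with hs|hs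
        · rw [max_eq_right (by linarith)]; ring
        · rw [max_eq_left (by linarith)]; ring
      · simp only [hdfull, if_neg h]; ring
    rw [hfrob1, hfrobU, hfrobV, hsum1, hc]
    have hfinal : ∑ i, (σ i - dfull i)^2 + lam * (∑ i, dfull i) + lam * (∑ i, dfull i)
        = ∑ i, ((σ i - dfull i)^2 + 2*lam*(dfull i)) := by
      rw [Finset.sum_add_distrib, ← Finset.mul_sum]
      ring
    rw [hfinal]
    have h2 : ∑ i, ((σ i - dfull i)^2 + 2*lam*(dfull i))
        = ∑ i, ((σ i)^2 - (if (i:ℕ) < k then (max (σ i - lam) 0)^2 else 0)) :=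
      Finset.sum_congr rfl fun i _ => hptwise i
    rw [h2, Finset.sum_sub_distrib, sum_top hk (fun i => (max (σ i - lam) 0)^2)]
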